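/- Uniform doubling along a Gromov-Hausdorff convergent sequence: let $(X_n,d_n)$ be compact $(L_0,\rho_0)$-quasi-selfsimilar metric spaces converging in the Gromov-Hausdorff sense to a compact space $(X_\infty, d_\infty)$. Then there exists $D_0 \geq 0$ such that $X_n$ is $D_0$-doubling for every $n$. -/

import Mathlib

/-- `Φ` witnesses quasi-selfsimilarity on the ball `B(x,ρ)`: it is `L0`-biLipschitz from
`(B(x,ρ), (ρ0/ρ)·d)` to `X` and its image contains `B(Φ x, ρ0/L0)`. -/
def QSSMap {X : Type*} [MetricSpace X] (L0 ρ0 : ℝ) (x : X) (ρ : ℝ) (Φ : X → X) : Prop :=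
  (∀ y ∈ Metric.ball x ρ, ∀ z ∈ Metric.ball x ρ,
    (ρ0 / ρ) * dist y z / L0 ≤ dist (Φ y) (Φ z) ∧
      dist (Φ y) (Φ z) ≤ L0 * ((ρ0 / ρ) * dist y z)) ∧
  Metric.ball (Φ x) (ρ0 / L0) ⊆ Φ '' (Metric.ball x ρ)

/-- A metric space is `(L0,ρ0)`-quasi-selfsimilar if every open ball of radius `0 < ρ ≤ ρ0`,
rescaled by `ρ0/ρ`, admits an `L0`-biLipschitz map to `X` whose image contains a ball
of radius `ρ0/L0`. -/
def QSS (X : Type*) [MetricSpace X] (L0 ρ0 : ℝ) : Prop :=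
  ∀ (x : X) (ρ : ℝ), 0 < ρ → ρ ≤ ρ0 → ∃ Φ : X → X, QSSMap L0 ρ0 x ρ Φ

/-- A metric space is `D`-doubling if any `ρ/2`-separated subset of a ball of radius `ρ`
has at most `D` elements. -/
def Doubling (X : Type*) [MetricSpace X] (D : ℕ) : Prop :=
  ∀ (x : X) (ρ : ℝ) (S : Finset X), (↑S : Set X) ⊆ Metric.ball x ρ →
    (∀ a ∈ S, ∀ b ∈ S, a ≠ b → ρ / 2 < dist a b) → S.card ≤ D

/-- A metric space is `a`-uniformly perfect if `closedBall x ρ \ ball x (a*ρ)` is nonempty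
for every `x` and every `0 ≤ ρ < Diam X`. -/
def UniformlyPerfect (X : Type*) [MetricSpace X] (a : ℝ) : Prop :=
  ∀ x : X, ∀ ρ : ℝ, 0 ≤ ρ → ρ < Metric.diam (Set.univ : Set X) →
    (Metric.closedBall x ρ \ Metric.ball x (a * ρ)).Nonempty

open Metric Set

/-- In a compact metric space, `s`-separated finsets have uniformly bounded cardinality. -/
lemma sep_card_bound (Z : Type*) [MetricSpace Z] [CompactSpace Z] {s : ℝ} (hs : 0 < s) :
    ∃ K : ℕ, ∀ S : Finset Z, (∀ a ∈ S, ∀ b ∈ S, a ≠ b → s ≤ dist a b) → S.card ≤ K := by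
  classical
  obtain ⟨t, htfin, htcov⟩ := (Metric.totallyBounded_iff.mp
    ((isCompact_univ : IsCompact (univ : Set Z)).totallyBounded)) (s / 2) (by linarith)
  refine ⟨htfin.toFinset.card, fun S hS => ?_⟩
  have hmap : ∀ a : Z, a ∈ S → ∃ y ∈ htfin.toFinset, a ∈ ball y (s / 2) := by
    intro a _
    have := htcov (mem_univ a)
    simp only [mem_iUnion, exists_prop] at this
    obtain ⟨y, hy, hya⟩ := this
    exact ⟨y, htfin.mem_toFinset.mpr hy, hya⟩
  choose f hf1 hf2 using hmap
  apply Finset.card_le_card_of_injOn (fun a => if h : a ∈ S then f a h else a)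
  · intro a ha
    simp only [Finset.mem_coe] at ha
    simpa [ha] using hf1 a ha
  · intro a ha b hb hab
    simp only [Finset.mem_coe] at ha hb
    simp only [] at hab
    rw [dif_pos ha, dif_pos hb] at hab
    by_contra hne
    have h1 := hf2 a ha
    have h2 := hf2 b hb
    rw [hab] at h1
    have : dist a b < s := by
      have := dist_triangle a (f b hb) b
      rw [mem_ball] at h1 h2
      rw [dist_comm] at h2
      linarith [h1, h2, this]
    exact absurd (hS a ha b hb hne) (by linarith)

/-- Doubling follows from a uniform bound on `ρ0/(2L0)`-separated sets via QSS. -/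
lemma doubling_of_sep_bound {Z : Type*} [MetricSpace Z] (L0 ρ0 : ℝ) (hL0 : 1 ≤ L0)
    (hρ0 : 0 < ρ0) (hq : QSS Z L0 ρ0) (K : ℕ)
    (hK : ∀ S : Finset Z, (∀ a ∈ S, ∀ b ∈ S, a ≠ b → ρ0 / (2 * L0) ≤ dist a b) → S.card ≤ K) :
    Doubling Z K := by
  classical
  have hL0' : 0 < L0 := lt_of_lt_of_le one_pos hL0
  intro x ρ S hS hsep
  rcases le_or_gt ρ 0 with hρ | hρ
  · have : S = ∅ := by
      rcases Finset.eq_empty_or_nonempty S with h | ⟨a, ha⟩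
      · exact h
      · exact absurd (hS (Finset.mem_coe.mpr ha)) (by simp [ball_eq_empty.mpr hρ])
    simp [this]
  rcases le_or_gt ρ ρ0 with hρρ0 | hρρ0
  · obtain ⟨Φ, hΦ, _⟩ := hq x ρ hρ hρρ0
    have key : ∀ a ∈ S, ∀ b ∈ S, a ≠ b → ρ0 / (2 * L0) ≤ dist (Φ a) (Φ b) := by
      intro a ha b hb hab
      have haB := hS (Finset.mem_coe.mpr ha)
      have hbB := hS (Finset.mem_coe.mpr hb)
      have hlow := (hΦ a haB b hbB).1
      have hd : ρ / 2 < dist a b := hsep a ha b hb hab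
      have heq : ρ0 / ρ * (ρ / 2) = ρ0 / 2 := by field_simp
      have h1 : ρ0 / 2 ≤ ρ0 / ρ * dist a b := by
        rw [← heq]; exact mul_le_mul_of_nonneg_left hd.le (by positivity)
      have : ρ0 / (2 * L0) ≤ ρ0 / ρ * dist a b / L0 := by
        rw [← div_div]
        gcongr
      linarith
    have hinj : Set.InjOn Φ S := by
      intro a ha b hb hab
      by_contra hne
      have := key a (Finset.mem_coe.mp ha) b (Finset.mem_coe.mp hb) hne
      rw [hab, dist_self] at this
      linarith [div_pos hρ0 (by positivity : (0:ℝ) < 2 * L0)]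
    rw [← Finset.card_image_of_injOn hinj]
    apply hK
    intro a' ha' b' hb' hab'
    simp only [Finset.mem_image] at ha' hb'
    obtain ⟨a, ha, rfl⟩ := ha'
    obtain ⟨b, hb, rfl⟩ := hb'
    exact key a ha b hb (fun h => hab' (by rw [h]))
  · apply hK
    intro a ha b hb hab
    have hd : ρ / 2 < dist a b := hsep a ha b hb hab
    have : ρ0 / (2 * L0) ≤ ρ0 / 2 := by
      apply div_le_div_of_nonneg_left hρ0.le two_pos; nlinarith
    nlinarith

/-- Uniform doubling along a Gromov-Hausdorff convergent sequence of compact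
`(L0,ρ0)`-quasi-selfsimilar spaces: there is `D0` such that every `X n` is `D0`-doubling. -/
theorem qss_GH_convergent_uniform_doubling (L0 ρ0 : ℝ) (hL0 : 1 ≤ L0) (hρ0 : 0 < ρ0)
    (X : ℕ → Type) [∀ n, MetricSpace (X n)] [∀ n, CompactSpace (X n)] [∀ n, Nonempty (X n)]
    (Y : Type) [MetricSpace Y] [CompactSpace Y] [Nonempty Y]
    (hqss : ∀ n, QSS (X n) L0 ρ0)
    (hGH : Filter.Tendsto (fun n => GromovHausdorff.toGHSpace (X n)) Filter.atTop
      (nhds (GromovHausdorff.toGHSpace Y))) :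
    ∃ D0 : ℕ, ∀ n, Doubling (X n) D0 := by
  classical
  have hL0' : 0 < L0 := lt_of_lt_of_le one_pos hL0
  set s : ℝ := ρ0 / (2 * L0) with hs_def
  have hs : 0 < s := by positivity
  obtain ⟨KY, hKY⟩ := sep_card_bound Y (by positivity : (0:ℝ) < s / 2)
  obtain ⟨N, hN⟩ := (Metric.tendsto_atTop.mp hGH) (s / 4) (by positivity)
  have hKn : ∀ n, ∃ K : ℕ, ∀ S : Finset (X n),
      (∀ a ∈ S, ∀ b ∈ S, a ≠ b → s ≤ dist a b) → S.card ≤ K :=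
    fun n => sep_card_bound (X n) hs
  choose K hK using hKn
  refine ⟨max KY ((Finset.range (N + 1)).sup K), fun n => ?_⟩
  apply doubling_of_sep_bound L0 ρ0 hL0 hρ0 (hqss n)
  intro S hS
  rcases le_or_gt n N with hn | hn
  · exact le_trans (hK n S hS)
      (le_max_of_le_right (Finset.le_sup (Finset.mem_range.mpr (by omega))))
  · have hd : dist (GromovHausdorff.toGHSpace (X n)) (GromovHausdorff.toGHSpace Y) < s / 4 :=
      hN n (by omega)
    obtain ⟨Φ, Ψ, hΦ, hΨ, hdist⟩ := GromovHausdorff.ghDist_eq_hausdorffDist (X n) Y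
    have hgh : hausdorffDist (range Φ) (range Ψ) < s / 4 := by
      rw [← hdist]; exact hd
    have hfin : EMetric.hausdorffEdist (range Φ) (range Ψ) ≠ ⊤ :=
      Metric.hausdorffEdist_ne_top_of_nonempty_of_bounded (range_nonempty Φ)
        (range_nonempty Ψ) (isCompact_range hΦ.continuous).isBounded
        (isCompact_range hΨ.continuous).isBounded
    have hchoice : ∀ a : X n, ∃ y : Y, dist (Φ a) (Ψ y) < s / 4 := by
      intro a
      obtain ⟨q, hq, hqd⟩ :=
        Metric.exists_dist_lt_of_hausdorffDist_lt (mem_range_self a) hgh hfin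
      obtain ⟨y, rfl⟩ := hq
      exact ⟨y, hqd⟩
    choose g hg using hchoice
    have key : ∀ a ∈ S, ∀ b ∈ S, a ≠ b → s / 2 ≤ dist (g a) (g b) := by
      intro a ha b hb hab
      have h1 := hg a
      have h2 := hg b
      have hab' : s ≤ dist a b := hS a ha b hb hab
      have hΦab : dist (Φ a) (Φ b) = dist a b := hΦ.dist_eq a b
      have hΨab : dist (Ψ (g a)) (Ψ (g b)) = dist (g a) (g b) := hΨ.dist_eq _ _
      have tri1 := dist_triangle (Φ a) (Ψ (g a)) (Ψ (g b))
      have tri2 := dist_triangle (Ψ (g a)) (Ψ (g b)) (Φ b)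
      have tri3 := dist_triangle (Φ a) (Ψ (g b)) (Φ b)
      have : dist (Φ a) (Φ b) ≤ dist (Φ a) (Ψ (g a)) + dist (Ψ (g a)) (Ψ (g b))
          + dist (Ψ (g b)) (Φ b) := dist_triangle4 _ _ _ _
      rw [dist_comm (Ψ (g b)) (Φ b)] at this
      linarith [h1, h2, hΦab ▸ this, hΨab]
    have hinj : Set.InjOn g S := by
      intro a ha b hb hab
      by_contra hne
      have := key a (Finset.mem_coe.mp ha) b (Finset.mem_coe.mp hb) hne
      rw [hab, dist_self] at this
      linarith
    rw [← Finset.card_image_of_injOn hinj]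
    refine le_max_of_le_left (hKY _ ?_)
    intro a' ha' b' hb' hab'
    simp only [Finset.mem_image] at ha' hb'
    obtain ⟨a, ha, rfl⟩ := ha'
    obtain ⟨b, hb, rfl⟩ := hb'
    exact key a ha b hb (fun h => hab' (by rw [h]))
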